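/- Let n ≥ 2 be an integer and let x ∈ ℝ^n_+. Then the sharp constant for the normal derivative coincides with that for the gradient in the case p = ∞: sup { |∂u_f/∂x_n (x)| / ‖f‖_{L^∞(ℝ^{n−1})} : f ∈ L^∞(ℝ^{n−1}), f ≠ 0 } = 4(n−1)^{(n−1)/2} ω_{n−1} / (n^{n/2} ω_n x_n). -/

import Mathlib

open MeasureTheory Real Metric
open scoped RealInnerProductSpace ENNReal

set_option maxHeartbeats 1000000
set_option synthInstance.maxHeartbeats 1000000

noncomputable section

/-- Area `ω_n` of the unit sphere `S^{n-1}` in `ℝ^n`. -/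
def sphereArea (n : ℕ) : ℝ := 2 * π ^ ((n : ℝ) / 2) / Real.Gamma ((n : ℝ) / 2)

/-- Embedding of `ℝ^{n-1}` into the boundary hyperplane of `ℝ^n`. -/
def embed (n : ℕ) (y : EuclideanSpace ℝ (Fin (n - 1))) : EuclideanSpace ℝ (Fin n) :=
  (EuclideanSpace.equiv (Fin n) ℝ).symm fun i => if h : (i : ℕ) < n - 1 then y ⟨i, h⟩ else 0

/-- The Poisson integral of `f : ℝ^{n-1} → ℝ` in the half-space `ℝ^n_+`. -/
def poisson (n : ℕ) (hn : 0 < n) (f : EuclideanSpace ℝ (Fin (n - 1)) → ℝ)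
    (x : EuclideanSpace ℝ (Fin n)) : ℝ :=
  (2 / sphereArea n) * ∫ y, (x ⟨n - 1, by omega⟩ / ‖embed n y - x‖ ^ n) * f y

/-- The unit vector `e_n` in `ℝ^n`. -/
def lastUnit (n : ℕ) (hn : 0 < n) : EuclideanSpace ℝ (Fin n) :=
  EuclideanSpace.single ⟨n - 1, by omega⟩ 1

namespace SharpAux

/-- exponent `-(m+1)/2` -/
def rr (m : ℕ) : ℝ := -(((m : ℕ) : ℝ) + 1) / 2

lemma two_rr (m : ℕ) : 2 * rr m = -((m : ℝ) + 1) := by simp [rr]; ring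

/-- projection to first m coordinates -/
def projE (m : ℕ) (v : EuclideanSpace ℝ (Fin (m + 1))) : EuclideanSpace ℝ (Fin m) :=
  WithLp.toLp 2 (fun i : Fin m => v i.castSucc)

lemma projE_sub (m : ℕ) (u v : EuclideanSpace ℝ (Fin (m + 1))) :
    projE m (u - v) = projE m u - projE m v := by
  ext i; simp [projE]

lemma norm_sq_split (m : ℕ) (v : EuclideanSpace ℝ (Fin (m + 1))) :
    ‖v‖ ^ 2 = ‖projE m v‖ ^ 2 + (v (Fin.last m)) ^ 2 := by
  have h1 : ‖v‖ ^ 2 = ∑ i, (v i) ^ 2 := by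
    rw [EuclideanSpace.norm_eq, Real.sq_sqrt (by positivity)]
    simp [Real.norm_eq_abs, sq_abs]
  have h2 : ‖projE m v‖ ^ 2 = ∑ i : Fin m, (v i.castSucc) ^ 2 := by
    rw [EuclideanSpace.norm_eq, Real.sq_sqrt (by positivity)]
    simp [projE, Real.norm_eq_abs, sq_abs]
  rw [h1, h2, Fin.sum_univ_castSucc]

lemma embed_apply (m : ℕ) (y : EuclideanSpace ℝ (Fin m)) (i : Fin (m + 1)) :
    embed (m + 1) y i = if h : (i : ℕ) < m then y ⟨i, h⟩ else 0 := rfl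

lemma projE_embed_sub (m : ℕ) (y : EuclideanSpace ℝ (Fin m)) (x : EuclideanSpace ℝ (Fin (m + 1))) :
    projE m (embed (m + 1) y - x) = y - projE m x := by
  ext i
  have hi : ((i.castSucc : Fin (m + 1)) : ℕ) < m := i.isLt
  show (embed (m + 1) y - x) i.castSucc = y i - projE m x i
  have : embed (m + 1) y i.castSucc = y i := by
    rw [embed_apply, dif_pos hi]
    exact congrArg y (Fin.ext (by simp))
  simp only [PiLp.sub_apply, this, projE, PiLp.toLp_apply]

lemma embed_last (m : ℕ) (y : EuclideanSpace ℝ (Fin m)) :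
    embed (m + 1) y (Fin.last m) = 0 := by
  rw [embed_apply, dif_neg (by simp)]

lemma last_embed_sub (m : ℕ) (y : EuclideanSpace ℝ (Fin m)) (x : EuclideanSpace ℝ (Fin (m + 1))) :
    (embed (m + 1) y - x) (Fin.last m) = -(x (Fin.last m)) := by
  simp only [PiLp.sub_apply, embed_last]
  ring

lemma normsq_embed_sub (m : ℕ) (y : EuclideanSpace ℝ (Fin m)) (x : EuclideanSpace ℝ (Fin (m + 1))) :
    ‖embed (m + 1) y - x‖ ^ 2 = ‖y - projE m x‖ ^ 2 + (x (Fin.last m)) ^ 2 := by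
  rw [norm_sq_split, projE_embed_sub, last_embed_sub]
  ring

lemma abs_last_le_norm (m : ℕ) (y : EuclideanSpace ℝ (Fin m)) (x : EuclideanSpace ℝ (Fin (m + 1))) :
    |x (Fin.last m)| ≤ ‖embed (m + 1) y - x‖ := by
  have h := normsq_embed_sub m y x
  have h1 : 0 ≤ ‖embed (m + 1) y - x‖ := norm_nonneg _
  nlinarith [sq_nonneg (‖y - projE m x‖), sq_abs (x (Fin.last m)), abs_nonneg (x (Fin.last m))]

lemma sub_le_norm (m : ℕ) (y : EuclideanSpace ℝ (Fin m)) (x : EuclideanSpace ℝ (Fin (m + 1))) :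
    ‖y - projE m x‖ ≤ ‖embed (m + 1) y - x‖ := by
  have h := normsq_embed_sub m y x
  have h1 : 0 ≤ ‖embed (m + 1) y - x‖ := norm_nonneg _
  nlinarith [norm_nonneg (y - projE m x), sq_nonneg (x (Fin.last m))]

lemma norm_projE_le (m : ℕ) (v : EuclideanSpace ℝ (Fin (m + 1))) : ‖projE m v‖ ≤ ‖v‖ := by
  have h := norm_sq_split m v
  nlinarith [norm_nonneg v, norm_nonneg (projE m v), sq_nonneg (v (Fin.last m))]

lemma continuous_embed (m : ℕ) :
    Continuous (fun y : EuclideanSpace ℝ (Fin m) => embed (m + 1) y) := by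
  have h : Continuous (fun y : EuclideanSpace ℝ (Fin m) =>
      (fun i : Fin (m + 1) => if h : (i : ℕ) < m then y ⟨i, h⟩ else 0 : Fin (m + 1) → ℝ)) := by
    apply continuous_pi
    intro i
    by_cases h : (i : ℕ) < m
    · simp only [dif_pos h]
      exact (EuclideanSpace.proj (⟨(i : ℕ), h⟩ : Fin m)).continuous
    · simp only [dif_neg h]
      exact continuous_const
  exact (EuclideanSpace.equiv (Fin (m + 1)) ℝ).symm.continuous.comp h

lemma sq_rpow {N : ℝ} (hN : 0 < N) (t : ℝ) : (N ^ 2) ^ t = N ^ (2 * t) := by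
  rw [← Real.rpow_natCast N 2, ← Real.rpow_mul hN.le]
  norm_num

lemma rpow_neg_nat {N : ℝ} (hN : 0 < N) (k : ℕ) : N ^ (-(k : ℝ)) = (N ^ k)⁻¹ := by
  rw [Real.rpow_neg hN.le, Real.rpow_natCast]

lemma max_lower {b C t : ℝ} (hb : 0 < b) (hC : 0 ≤ C) (ht : 0 ≤ t) :
    b / (1 + C + b) * (1 + t) ≤ max b (t - C) := by
  rcases le_total t (b + C) with h | h
  · refine le_max_of_le_left ?_
    rw [div_mul_eq_mul_div, div_le_iff₀ (by positivity)]
    nlinarith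
  · refine le_max_of_le_right ?_
    rw [div_mul_eq_mul_div, div_le_iff₀ (by positivity)]
    nlinarith [mul_nonneg (sub_nonneg.2 h) hC]

lemma integrable_beta (m : ℕ) {b C p : ℝ} (hb : 0 < b) (hC : 0 ≤ C) (hp : (m : ℝ) < p) :
    Integrable (fun y : EuclideanSpace ℝ (Fin m) => (max b (‖y‖ - C)) ^ (-p)) := by
  have hκ : (0:ℝ) < b / (1 + C + b) := by positivity
  have hint : Integrable (fun y : EuclideanSpace ℝ (Fin m) =>
      (b / (1 + C + b)) ^ (-p) * (1 + ‖y‖) ^ (-p)) := by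
    refine Integrable.const_mul ?_ _
    exact integrable_one_add_norm (by rw [finrank_euclideanSpace_fin]; exact hp)
  refine hint.mono' ?_ ?_
  · apply Continuous.aestronglyMeasurable
    apply Continuous.rpow_const (continuous_const.max (continuous_norm.sub continuous_const))
    intro y; left; exact (lt_of_lt_of_le hb (le_max_left _ _)).ne'
  · refine ae_of_all _ fun y => ?_
    have hβ : 0 < max b (‖y‖ - C) := lt_of_lt_of_le hb (le_max_left _ _)
    rw [Real.norm_eq_abs, abs_of_pos (Real.rpow_pos_of_pos hβ _)]
    have h1 : b / (1 + C + b) * (1 + ‖y‖) ≤ max b (‖y‖ - C) := max_lower hb hC (norm_nonneg y)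
    have hple : -p ≤ 0 := neg_nonpos.mpr ((Nat.cast_nonneg m).trans hp.le)
    calc (max b (‖y‖ - C)) ^ (-p) ≤ (b / (1 + C + b) * (1 + ‖y‖)) ^ (-p) :=
          Real.rpow_le_rpow_of_nonpos (by positivity) h1 hple
      _ = (b / (1 + C + b)) ^ (-p) * (1 + ‖y‖) ^ (-p) :=
          Real.mul_rpow hκ.le (by positivity)

/-- the kernel appearing in the normal derivative of the Poisson integral -/
def Kker (m : ℕ) (x : EuclideanSpace ℝ (Fin (m + 1))) (y : EuclideanSpace ℝ (Fin m)) : ℝ :=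
  (‖embed (m + 1) y - x‖ ^ 2) ^ rr m -
    ((m : ℝ) + 1) * (x (Fin.last m)) ^ 2 * (‖embed (m + 1) y - x‖ ^ 2) ^ (rr m - 1)

/-- the full derivative of `z ↦ z_n / ‖embed y - z‖^(m+1)` -/
def Dker (m : ℕ) (y : EuclideanSpace ℝ (Fin m)) (x : EuclideanSpace ℝ (Fin (m + 1))) :
    EuclideanSpace ℝ (Fin (m + 1)) →L[ℝ] ℝ :=
  ((‖embed (m + 1) y - x‖ ^ 2) ^ rr m) • innerSL ℝ (EuclideanSpace.single (Fin.last m) (1 : ℝ)) -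
    (2 * rr m * x (Fin.last m) * (‖embed (m + 1) y - x‖ ^ 2) ^ (rr m - 1)) •
      innerSL ℝ (embed (m + 1) y - x)

lemma Dker_apply_last (m : ℕ) (y : EuclideanSpace ℝ (Fin m)) (x : EuclideanSpace ℝ (Fin (m + 1))) :
    Dker m y x (EuclideanSpace.single (Fin.last m) (1 : ℝ)) = Kker m x y := by
  have h1 : (innerSL ℝ (EuclideanSpace.single (Fin.last m) (1 : ℝ)))
      (EuclideanSpace.single (Fin.last m) (1 : ℝ)) = 1 := by
    simp [EuclideanSpace.inner_single_left]
  have h2 : (innerSL ℝ (embed (m + 1) y - x)) (EuclideanSpace.single (Fin.last m) (1 : ℝ)) =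
      -(x (Fin.last m)) := by
    simp only [innerSL_apply_apply]
    rw [real_inner_comm, EuclideanSpace.inner_single_left]
    simp [embed_last]
  simp only [Dker, ContinuousLinearMap.sub_apply, ContinuousLinearMap.smul_apply, h1, h2,
    smul_eq_mul, Kker]
  have h3 : 2 * rr m = -((m : ℝ) + 1) := two_rr m
  linear_combination (x (Fin.last m)) ^ 2 * ((‖embed (m + 1) y - x‖ ^ 2) ^ (rr m - 1)) * h3

lemma Dker_norm_le (m : ℕ) (y : EuclideanSpace ℝ (Fin m)) (x : EuclideanSpace ℝ (Fin (m + 1)))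
    (hN : 0 < ‖embed (m + 1) y - x‖) :
    ‖Dker m y x‖ ≤ ‖embed (m + 1) y - x‖ ^ (-((m : ℝ) + 1)) +
      ((m : ℝ) + 1) * |x (Fin.last m)| * ‖embed (m + 1) y - x‖ ^ (-((m : ℝ) + 2)) := by
  set N := ‖embed (m + 1) y - x‖ with hNdef
  have e1 : (N ^ 2) ^ rr m = N ^ (-((m : ℝ) + 1)) := by
    rw [sq_rpow hN, two_rr]
  have e2 : (N ^ 2) ^ (rr m - 1) = N ^ (-((m : ℝ) + 3)) := by
    rw [sq_rpow hN]
    congr 1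
    simp [rr]; ring
  have h4 : |2 * rr m| = (m : ℝ) + 1 := by
    rw [two_rr, abs_neg, abs_of_nonneg (by positivity)]
  have h3 : N ^ (-((m : ℝ) + 3)) * N = N ^ (-((m : ℝ) + 2)) := by
    have h := Real.rpow_add hN (-((m : ℝ) + 3)) 1
    rw [Real.rpow_one] at h
    rw [← h]
    congr 1
    ring
  refine ContinuousLinearMap.opNorm_le_bound _ ?_ fun w => ?_
  · exact add_nonneg (Real.rpow_nonneg hN.le _)
      (mul_nonneg (mul_nonneg (by positivity) (abs_nonneg _)) (Real.rpow_nonneg hN.le _))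
  simp only [Dker, ContinuousLinearMap.sub_apply, ContinuousLinearMap.smul_apply,
    smul_eq_mul, innerSL_apply_apply]
  rw [Real.norm_eq_abs]
  have c1 : |⟪EuclideanSpace.single (Fin.last m) (1 : ℝ), w⟫| ≤ ‖w‖ := by
    have h := abs_real_inner_le_norm (EuclideanSpace.single (Fin.last m) (1 : ℝ)) w
    simpa [EuclideanSpace.norm_single] using h
  have c2 : |⟪embed (m + 1) y - x, w⟫| ≤ N * ‖w‖ := by
    have h := abs_real_inner_le_norm (embed (m + 1) y - x) w
    rwa [← hNdef] at h
  have a1 : |(N ^ 2) ^ rr m * ⟪EuclideanSpace.single (Fin.last m) (1 : ℝ), w⟫| ≤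
      N ^ (-((m : ℝ) + 1)) * ‖w‖ := by
    rw [abs_mul, abs_of_pos (Real.rpow_pos_of_pos (by positivity) _), e1]
    exact mul_le_mul_of_nonneg_left c1 (Real.rpow_nonneg hN.le _)
  have a2 : |2 * rr m * x (Fin.last m) * (N ^ 2) ^ (rr m - 1) * ⟪embed (m + 1) y - x, w⟫| ≤
      ((m : ℝ) + 1) * |x (Fin.last m)| * N ^ (-((m : ℝ) + 2)) * ‖w‖ := by
    rw [abs_mul]
    have hco : |2 * rr m * x (Fin.last m) * (N ^ 2) ^ (rr m - 1)| =
        ((m : ℝ) + 1) * |x (Fin.last m)| * N ^ (-((m : ℝ) + 3)) := by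
      rw [abs_mul, abs_mul, h4, abs_of_pos (Real.rpow_pos_of_pos (by positivity : (0:ℝ) < N ^ 2) _), e2]
    rw [hco]
    calc ((m : ℝ) + 1) * |x (Fin.last m)| * N ^ (-((m : ℝ) + 3)) * |⟪embed (m + 1) y - x, w⟫| ≤
        ((m : ℝ) + 1) * |x (Fin.last m)| * N ^ (-((m : ℝ) + 3)) * (N * ‖w‖) := by
          refine mul_le_mul_of_nonneg_left c2 ?_
          exact mul_nonneg (mul_nonneg (by positivity) (abs_nonneg _)) (Real.rpow_nonneg hN.le _)
      _ = ((m : ℝ) + 1) * |x (Fin.last m)| * (N ^ (-((m : ℝ) + 3)) * N) * ‖w‖ := by ring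
      _ = ((m : ℝ) + 1) * |x (Fin.last m)| * N ^ (-((m : ℝ) + 2)) * ‖w‖ := by rw [h3]
  calc |(N ^ 2) ^ rr m * ⟪EuclideanSpace.single (Fin.last m) (1 : ℝ), w⟫ -
        2 * rr m * x (Fin.last m) * (N ^ 2) ^ (rr m - 1) * ⟪embed (m + 1) y - x, w⟫| ≤
      |(N ^ 2) ^ rr m * ⟪EuclideanSpace.single (Fin.last m) (1 : ℝ), w⟫| +
        |2 * rr m * x (Fin.last m) * (N ^ 2) ^ (rr m - 1) * ⟪embed (m + 1) y - x, w⟫| :=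
      abs_sub _ _
    _ ≤ (N ^ (-((m : ℝ) + 1)) + ((m : ℝ) + 1) * |x (Fin.last m)| * N ^ (-((m : ℝ) + 2))) * ‖w‖ := by
      rw [add_mul]
      exact add_le_add a1 a2

lemma abs_coord_le_norm {ι : Type*} [Fintype ι]
    (v : EuclideanSpace ℝ ι) (i : ι) : |v i| ≤ ‖v‖ := by
  have h1 : |v i| = Real.sqrt (‖v i‖ ^ 2) := by
    rw [Real.sqrt_sq (norm_nonneg _), Real.norm_eq_abs]
  rw [h1, EuclideanSpace.norm_eq]
  apply Real.sqrt_le_sqrt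
  exact Finset.single_le_sum (f := fun j => ‖v j‖ ^ 2) (fun j _ => by positivity)
    (Finset.mem_univ i)

lemma ae_abs_le {α : Type*} [MeasurableSpace α] {μ : Measure α} {f : α → ℝ}
    (hf : MemLp f ⊤ μ) : ∀ᵐ y ∂μ, |f y| ≤ (eLpNorm f ⊤ μ).toReal := by
  filter_upwards [MeasureTheory.ae_le_eLpNormEssSup (f := f) (μ := μ)] with y hy
  have hne : eLpNormEssSup f μ ≠ ⊤ := by
    rw [← eLpNorm_exponent_top]; exact hf.eLpNorm_ne_top
  have h2 := ENNReal.toReal_mono hne hy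
  rw [eLpNorm_exponent_top]
  simpa [Real.norm_eq_abs] using h2

lemma hasFDerivAt_kernelFun (m : ℕ) (y : EuclideanSpace ℝ (Fin m))
    (x : EuclideanSpace ℝ (Fin (m + 1))) (hx : x (Fin.last m) ≠ 0) :
    HasFDerivAt (fun z : EuclideanSpace ℝ (Fin (m + 1)) =>
      z (Fin.last m) / ‖embed (m + 1) y - z‖ ^ (m + 1)) (Dker m y x) x := by
  have hNx : 0 < ‖embed (m + 1) y - x‖ :=
    lt_of_lt_of_le (abs_pos.mpr hx) (abs_last_le_norm m y x)
  have hsub : HasFDerivAt (fun z : EuclideanSpace ℝ (Fin (m + 1)) => embed (m + 1) y - z)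
      ((0 : EuclideanSpace ℝ (Fin (m + 1)) →L[ℝ] EuclideanSpace ℝ (Fin (m + 1))) -
        ContinuousLinearMap.id ℝ _) x :=
    (hasFDerivAt_const (embed (m + 1) y) x).sub (hasFDerivAt_id x)
  have hQ : HasFDerivAt (fun z : EuclideanSpace ℝ (Fin (m + 1)) => ‖embed (m + 1) y - z‖ ^ 2)
      ((-2 : ℝ) • innerSL ℝ (embed (m + 1) y - x)) x := by
    have h1 := hsub.norm_sq
    have h2 : ((-2 : ℝ) • innerSL ℝ (embed (m + 1) y - x) :
        EuclideanSpace ℝ (Fin (m + 1)) →L[ℝ] ℝ) =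
        2 • (innerSL ℝ (embed (m + 1) y - x)).comp
          ((0 : EuclideanSpace ℝ (Fin (m + 1)) →L[ℝ] EuclideanSpace ℝ (Fin (m + 1))) -
            ContinuousLinearMap.id ℝ _) := by
      ext w
      simp only [ContinuousLinearMap.smul_apply, ContinuousLinearMap.comp_apply,
        ContinuousLinearMap.sub_apply, ContinuousLinearMap.zero_apply,
        ContinuousLinearMap.coe_id', id_eq, innerSL_apply_apply, zero_sub, inner_neg_right,
        smul_eq_mul, two_smul, ContinuousLinearMap.add_apply, ContinuousLinearMap.neg_apply]
      ring
    rw [h2]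
    exact h1
  have hQx : (0 : ℝ) < ‖embed (m + 1) y - x‖ ^ 2 := by positivity
  have hQr := hQ.rpow_const (p := rr m) (Or.inl hQx.ne')
  have hπ : HasFDerivAt (fun z : EuclideanSpace ℝ (Fin (m + 1)) => z (Fin.last m))
      (innerSL ℝ (EuclideanSpace.single (Fin.last m) (1 : ℝ))) x := by
    have h := (innerSL ℝ (EuclideanSpace.single (Fin.last m) (1 : ℝ))).hasFDerivAt (x := x)
    have h2 : ⇑(innerSL ℝ (EuclideanSpace.single (Fin.last m) (1 : ℝ))) =
        fun z : EuclideanSpace ℝ (Fin (m + 1)) => z (Fin.last m) := by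
      funext z
      simp [EuclideanSpace.inner_single_left]
    rwa [h2] at h
  have hmul := hπ.mul hQr
  have hg : HasFDerivAt (fun z : EuclideanSpace ℝ (Fin (m + 1)) =>
      z (Fin.last m) * (‖embed (m + 1) y - z‖ ^ 2) ^ rr m) (Dker m y x) x := by
    refine hmul.congr_fderiv ?_
    ext w
    simp only [Dker, ContinuousLinearMap.add_apply, ContinuousLinearMap.sub_apply,
      ContinuousLinearMap.smul_apply, smul_eq_mul, innerSL_apply_apply]
    ring
  apply hg.congr_of_eventuallyEq
  have hopen : IsOpen {z : EuclideanSpace ℝ (Fin (m + 1)) | 0 < ‖embed (m + 1) y - z‖} :=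
    isOpen_lt continuous_const (continuous_const.sub continuous_id).norm
  filter_upwards [hopen.mem_nhds hNx] with z hz
  have e : (‖embed (m + 1) y - z‖ ^ 2) ^ rr m = (‖embed (m + 1) y - z‖ ^ (m + 1))⁻¹ := by
    rw [sq_rpow hz, two_rr,
      show -(((m : ℕ) : ℝ) + 1) = -(((m + 1 : ℕ) : ℝ)) by push_cast; ring,
      rpow_neg_nat hz]
  rw [e, div_eq_mul_inv]

lemma N_pos (m : ℕ) {x : EuclideanSpace ℝ (Fin (m + 1))} (hx : x (Fin.last m) ≠ 0)
    (y : EuclideanSpace ℝ (Fin m)) : 0 < ‖embed (m + 1) y - x‖ :=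
  lt_of_lt_of_le (abs_pos.mpr hx) (abs_last_le_norm m y x)

lemma mem_ball_facts (m : ℕ) {x z : EuclideanSpace ℝ (Fin (m + 1))}
    (hz : z ∈ ball x (x (Fin.last m) / 2)) :
    x (Fin.last m) / 2 < z (Fin.last m) ∧ z (Fin.last m) ≤ 3 * x (Fin.last m) / 2 ∧
      ‖projE m z‖ ≤ ‖projE m x‖ + x (Fin.last m) / 2 := by
  have hd : ‖z - x‖ < x (Fin.last m) / 2 := by
    rw [mem_ball, dist_eq_norm] at hz; exact hz
  have h1 : |z (Fin.last m) - x (Fin.last m)| ≤ ‖z - x‖ := by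
    have h := abs_coord_le_norm (z - x) (Fin.last m)
    simpa [PiLp.sub_apply] using h
  have h1' := abs_lt.mp (lt_of_le_of_lt h1 hd)
  refine ⟨by linarith [h1'.1], by linarith [h1'.2], ?_⟩
  have h2 : ‖projE m z - projE m x‖ ≤ ‖z - x‖ := by
    rw [← projE_sub]; exact norm_projE_le m _
  have h3 := norm_sub_norm_le (projE m z) (projE m x)
  linarith

lemma N_lower (m : ℕ) {x z : EuclideanSpace ℝ (Fin (m + 1))}
    (hz : z ∈ ball x (x (Fin.last m) / 2)) (hx : 0 < x (Fin.last m))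
    (y : EuclideanSpace ℝ (Fin m)) :
    max (x (Fin.last m) / 2) (‖y‖ - (‖projE m x‖ + x (Fin.last m) / 2)) ≤
      ‖embed (m + 1) y - z‖ := by
  obtain ⟨h1, h2, h3⟩ := mem_ball_facts m hz
  apply max_le
  · calc x (Fin.last m) / 2 ≤ |z (Fin.last m)| := by
          rw [abs_of_pos (by linarith)]; linarith
      _ ≤ ‖embed (m + 1) y - z‖ := abs_last_le_norm m y z
  · calc ‖y‖ - (‖projE m x‖ + x (Fin.last m) / 2) ≤ ‖y‖ - ‖projE m z‖ := by linarith
      _ ≤ ‖y - projE m z‖ := norm_sub_norm_le y (projE m z)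
      _ ≤ ‖embed (m + 1) y - z‖ := sub_le_norm m y z

lemma Dker_bound (m : ℕ) {x z : EuclideanSpace ℝ (Fin (m + 1))} (hx : 0 < x (Fin.last m))
    (hz : z ∈ ball x (x (Fin.last m) / 2)) (y : EuclideanSpace ℝ (Fin m)) :
    ‖Dker m y z‖ ≤ (1 + 3 * ((m : ℝ) + 1)) *
      (max (x (Fin.last m) / 2) (‖y‖ - (‖projE m x‖ + x (Fin.last m) / 2))) ^ (-((m : ℝ) + 1)) := by
  obtain ⟨h1, h2, h3⟩ := mem_ball_facts m hz
  have hβpos : 0 < max (x (Fin.last m) / 2) (‖y‖ - (‖projE m x‖ + x (Fin.last m) / 2)) :=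
    lt_of_lt_of_le (half_pos hx) (le_max_left _ _)
  have hβN := N_lower m hz hx y
  have hN : 0 < ‖embed (m + 1) y - z‖ := lt_of_lt_of_le hβpos hβN
  set β := max (x (Fin.last m) / 2) (‖y‖ - (‖projE m x‖ + x (Fin.last m) / 2)) with hβdef
  set N := ‖embed (m + 1) y - z‖ with hNdef
  have hb := Dker_norm_le m y z hN
  have t1 : N ^ (-((m : ℝ) + 1)) ≤ β ^ (-((m : ℝ) + 1)) :=
    Real.rpow_le_rpow_of_nonpos hβpos hβN (neg_nonpos.mpr (by positivity))
  have t2 : N ^ (-((m : ℝ) + 2)) ≤ (2 / x (Fin.last m)) * N ^ (-((m : ℝ) + 1)) := by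
    have e : N ^ (-((m : ℝ) + 2)) = N ^ (-((m : ℝ) + 1)) * N ^ (-1 : ℝ) := by
      rw [← Real.rpow_add hN]
      congr 1
      ring
    have hNi : N ^ (-1 : ℝ) = N⁻¹ := Real.rpow_neg_one N
    have hNinv : N⁻¹ ≤ 2 / x (Fin.last m) := by
      have hge : x (Fin.last m) / 2 ≤ N := le_trans (le_max_left _ _) hβN
      have := one_div_le_one_div_of_le (half_pos hx) hge
      rw [one_div, one_div] at this
      calc N⁻¹ ≤ (x (Fin.last m) / 2)⁻¹ := this
        _ = 2 / x (Fin.last m) := by rw [inv_div]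
    calc N ^ (-((m : ℝ) + 2)) = N ^ (-((m : ℝ) + 1)) * N⁻¹ := by rw [e, hNi]
      _ ≤ N ^ (-((m : ℝ) + 1)) * (2 / x (Fin.last m)) :=
          mul_le_mul_of_nonneg_left hNinv (Real.rpow_nonneg hN.le _)
      _ = (2 / x (Fin.last m)) * N ^ (-((m : ℝ) + 1)) := by ring
  have hz3 : |z (Fin.last m)| ≤ 3 * x (Fin.last m) / 2 := by
    rw [abs_of_pos (by linarith)]; linarith
  have hNn : 0 ≤ N ^ (-((m : ℝ) + 1)) := Real.rpow_nonneg hN.le _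
  have hNn2 : 0 ≤ N ^ (-((m : ℝ) + 2)) := Real.rpow_nonneg hN.le _
  calc ‖Dker m y z‖ ≤ N ^ (-((m : ℝ) + 1)) + ((m : ℝ) + 1) * |z (Fin.last m)| *
        N ^ (-((m : ℝ) + 2)) := hb
    _ ≤ N ^ (-((m : ℝ) + 1)) + ((m : ℝ) + 1) * (3 * x (Fin.last m) / 2) *
        ((2 / x (Fin.last m)) * N ^ (-((m : ℝ) + 1))) := by
        have u1 : ((m : ℝ) + 1) * |z (Fin.last m)| * N ^ (-((m : ℝ) + 2)) ≤
            ((m : ℝ) + 1) * (3 * x (Fin.last m) / 2) * ((2 / x (Fin.last m)) *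
              N ^ (-((m : ℝ) + 1))) := by
          refine mul_le_mul (by nlinarith [abs_nonneg (z (Fin.last m))]) t2 hNn2
            (mul_nonneg (by positivity) (by linarith))
        linarith
    _ = (1 + 3 * ((m : ℝ) + 1)) * N ^ (-((m : ℝ) + 1)) := by
        have ha' : x (Fin.last m) ≠ 0 := hx.ne'
        field_simp
    _ ≤ (1 + 3 * ((m : ℝ) + 1)) * β ^ (-((m : ℝ) + 1)) := by
        refine mul_le_mul_of_nonneg_left t1 (by positivity)

lemma kernelFun_aesm (m : ℕ) (z : EuclideanSpace ℝ (Fin (m + 1))) (hz : z (Fin.last m) ≠ 0)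
    {f : EuclideanSpace ℝ (Fin m) → ℝ} (hf : AEStronglyMeasurable f volume) :
    AEStronglyMeasurable (fun y : EuclideanSpace ℝ (Fin m) =>
      (z (Fin.last m) / ‖embed (m + 1) y - z‖ ^ (m + 1)) * f y) volume := by
  refine (Continuous.aestronglyMeasurable ?_).mul hf
  refine continuous_const.div (((continuous_embed m).sub continuous_const).norm.pow (m + 1)) ?_
  intro y
  exact pow_ne_zero _ (N_pos m hz y).ne'

lemma continuous_Dker (m : ℕ) {x : EuclideanSpace ℝ (Fin (m + 1))} (hx : x (Fin.last m) ≠ 0) :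
    Continuous (fun y : EuclideanSpace ℝ (Fin m) => Dker m y x) := by
  have hce : Continuous fun y : EuclideanSpace ℝ (Fin m) => embed (m + 1) y - x :=
    (continuous_embed m).sub continuous_const
  have hQc : Continuous fun y : EuclideanSpace ℝ (Fin m) => ‖embed (m + 1) y - x‖ ^ 2 :=
    (hce.norm).pow 2
  have hQne : ∀ y : EuclideanSpace ℝ (Fin m), (‖embed (m + 1) y - x‖ ^ 2 : ℝ) ≠ 0 := fun y => by
    have := N_pos m hx y
    positivity
  exact ((hQc.rpow_const fun y => Or.inl (hQne y)).smul continuous_const).sub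
    ((continuous_const.mul (hQc.rpow_const fun y => Or.inl (hQne y))).smul
      ((innerSL ℝ).continuous.comp hce))

lemma integrable_smul_Dker (m : ℕ) {x : EuclideanSpace ℝ (Fin (m + 1))}
    (hx : 0 < x (Fin.last m)) (f : EuclideanSpace ℝ (Fin m) → ℝ) (hf : MemLp f ⊤ volume) :
    Integrable (fun y : EuclideanSpace ℝ (Fin m) => f y • Dker m y x) := by
  have hxball : x ∈ ball x (x (Fin.last m) / 2) := mem_ball_self (half_pos hx)
  refine Integrable.mono'
    (g := fun y : EuclideanSpace ℝ (Fin m) => (eLpNorm f ⊤ volume).toReal *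
      ((1 + 3 * ((m : ℝ) + 1)) *
        (max (x (Fin.last m) / 2) (‖y‖ - (‖projE m x‖ + x (Fin.last m) / 2))) ^ (-((m : ℝ) + 1))))
    ?_ ?_ ?_
  · exact ((integrable_beta m (half_pos hx)
      (by have := norm_nonneg (projE m x); linarith) (by push_cast; linarith)).const_mul _).const_mul _
  · exact hf.1.smul (continuous_Dker m hx.ne').aestronglyMeasurable
  · filter_upwards [ae_abs_le hf] with y hy
    refine le_trans (norm_smul_le (f y) (Dker m y x)) ?_
    rw [Real.norm_eq_abs]
    exact mul_le_mul hy (Dker_bound m hx hxball y) (norm_nonneg _) ENNReal.toReal_nonneg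

lemma poisson_hasFDerivAt (m : ℕ) (x : EuclideanSpace ℝ (Fin (m + 1)))
    (hx : 0 < x (Fin.last m)) (f : EuclideanSpace ℝ (Fin m) → ℝ) (hf : MemLp f ⊤ volume) :
    HasFDerivAt (fun z : EuclideanSpace ℝ (Fin (m + 1)) =>
        ∫ y : EuclideanSpace ℝ (Fin m), (z (Fin.last m) / ‖embed (m + 1) y - z‖ ^ (m + 1)) * f y)
      (∫ y, f y • Dker m y x) x := by
  have hM0 : (0:ℝ) ≤ (eLpNorm f ⊤ volume).toReal := ENNReal.toReal_nonneg
  refine hasFDerivAt_integral_of_dominated_of_fderiv_le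
    (F' := fun z (y : EuclideanSpace ℝ (Fin m)) => f y • Dker m y z)
    (bound := fun y : EuclideanSpace ℝ (Fin m) => (eLpNorm f ⊤ volume).toReal *
      ((1 + 3 * ((m : ℝ) + 1)) *
        (max (x (Fin.last m) / 2) (‖y‖ - (‖projE m x‖ + x (Fin.last m) / 2))) ^ (-((m : ℝ) + 1))))
    (Metric.ball_mem_nhds x (half_pos hx)) ?_ ?_ ?_ ?_ ?_ ?_
  · filter_upwards [Metric.ball_mem_nhds x (half_pos hx)] with z hz
    have h1 := (mem_ball_facts m hz).1
    exact kernelFun_aesm m z (lt_trans (half_pos hx) h1).ne' hf.1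
  · refine Integrable.mono'
      (g := fun y : EuclideanSpace ℝ (Fin m) => (eLpNorm f ⊤ volume).toReal *
        ((3 * x (Fin.last m) / 2) *
          (max (x (Fin.last m) / 2) (‖y‖ - (‖projE m x‖ + x (Fin.last m) / 2))) ^
            (-((m : ℝ) + 1))))
      (((integrable_beta m (half_pos hx)
          (by have := norm_nonneg (projE m x); linarith) (by push_cast; linarith)).const_mul _).const_mul _)
      (kernelFun_aesm m x hx.ne' hf.1) ?_
    filter_upwards [ae_abs_le hf] with y hy
    have hβpos : 0 < max (x (Fin.last m) / 2) (‖y‖ - (‖projE m x‖ + x (Fin.last m) / 2)) :=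
      lt_of_lt_of_le (half_pos hx) (le_max_left _ _)
    have hβN := N_lower m (mem_ball_self (half_pos hx)) hx y
    have hN : 0 < ‖embed (m + 1) y - x‖ := lt_of_lt_of_le hβpos hβN
    have eInv : (‖embed (m + 1) y - x‖ ^ (m + 1) : ℝ)⁻¹ =
        ‖embed (m + 1) y - x‖ ^ (-((m : ℝ) + 1)) := by
      rw [show -((m : ℝ) + 1) = -(((m + 1 : ℕ)) : ℝ) by push_cast; ring, rpow_neg_nat hN]
    have e2 : ‖embed (m + 1) y - x‖ ^ (-((m : ℝ) + 1)) ≤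
        (max (x (Fin.last m) / 2) (‖y‖ - (‖projE m x‖ + x (Fin.last m) / 2))) ^
          (-((m : ℝ) + 1)) :=
      Real.rpow_le_rpow_of_nonpos hβpos hβN (neg_nonpos.mpr (by positivity))
    rw [Real.norm_eq_abs, abs_mul]
    have e0 : |x (Fin.last m) / ‖embed (m + 1) y - x‖ ^ (m + 1)| =
        x (Fin.last m) * ‖embed (m + 1) y - x‖ ^ (-((m : ℝ) + 1)) := by
      rw [abs_of_nonneg (div_nonneg hx.le (by positivity)), div_eq_mul_inv, eInv]
    rw [e0]
    calc x (Fin.last m) * ‖embed (m + 1) y - x‖ ^ (-((m : ℝ) + 1)) * |f y| ≤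
        x (Fin.last m) * (max (x (Fin.last m) / 2)
          (‖y‖ - (‖projE m x‖ + x (Fin.last m) / 2))) ^ (-((m : ℝ) + 1)) *
          (eLpNorm f ⊤ volume).toReal := by
          exact mul_le_mul (mul_le_mul_of_nonneg_left e2 hx.le) hy (abs_nonneg _)
            (mul_nonneg hx.le (Real.rpow_nonneg hβpos.le _))
      _ ≤ (eLpNorm f ⊤ volume).toReal * ((3 * x (Fin.last m) / 2) *
          (max (x (Fin.last m) / 2) (‖y‖ - (‖projE m x‖ + x (Fin.last m) / 2))) ^
            (-((m : ℝ) + 1))) := by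
          nlinarith [mul_nonneg (mul_nonneg hx.le (Real.rpow_nonneg hβpos.le
            (-((m : ℝ) + 1)))) hM0]
  · exact (integrable_smul_Dker m hx f hf).aestronglyMeasurable
  · filter_upwards [ae_abs_le hf] with y hy
    intro z hz
    refine le_trans (norm_smul_le (f y) (Dker m y z)) ?_
    rw [Real.norm_eq_abs]
    exact mul_le_mul hy (Dker_bound m hx hz y) (norm_nonneg _) ENNReal.toReal_nonneg
  · exact ((integrable_beta m (half_pos hx)
      (by have := norm_nonneg (projE m x); linarith) (by push_cast; linarith)).const_mul _).const_mul _
  · refine ae_of_all _ fun y z hz => ?_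
    have h1 := (mem_ball_facts m hz).1
    exact (hasFDerivAt_kernelFun m y z (lt_trans (half_pos hx) h1).ne').mul_const (f y)

lemma fderiv_poisson (m : ℕ) (x : EuclideanSpace ℝ (Fin (m + 1)))
    (hx : 0 < x (Fin.last m)) (f : EuclideanSpace ℝ (Fin m) → ℝ) (hf : MemLp f ⊤ volume) :
    fderiv ℝ (poisson (m + 1) (Nat.succ_pos m) f) x (lastUnit (m + 1) (Nat.succ_pos m)) =
      (2 / sphereArea (m + 1)) * ∫ y, f y * Kker m x y := by
  have hD := poisson_hasFDerivAt m x hx f hf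
  have h2 : HasFDerivAt (poisson (m + 1) (Nat.succ_pos m) f)
      ((2 / sphereArea (m + 1)) • (∫ y, f y • Dker m y x)) x := by
    have h := hD.const_mul (2 / sphereArea (m + 1))
    exact h
  rw [h2.fderiv, ContinuousLinearMap.smul_apply, smul_eq_mul]
  congr 1
  rw [ContinuousLinearMap.integral_apply (integrable_smul_Dker m hx f hf)]
  refine integral_congr_ae (Filter.Eventually.of_forall fun y => ?_)
  show (f y • Dker m y x) (lastUnit (m + 1) (Nat.succ_pos m)) = f y * Kker m x y
  rw [ContinuousLinearMap.smul_apply, smul_eq_mul]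
  congr 1
  exact Dker_apply_last m y x

lemma integrable_Kker (m : ℕ) {x : EuclideanSpace ℝ (Fin (m + 1))}
    (hx : 0 < x (Fin.last m)) :
    Integrable (fun y : EuclideanSpace ℝ (Fin m) => Kker m x y) := by
  refine Integrable.mono'
    (g := fun y : EuclideanSpace ℝ (Fin m) => (1 + ((m : ℝ) + 1)) *
      (max (x (Fin.last m) / 2) (‖y‖ - (‖projE m x‖ + x (Fin.last m) / 2))) ^ (-((m : ℝ) + 1)))
    ((integrable_beta m (half_pos hx) (by have := norm_nonneg (projE m x); linarith) (by push_cast; linarith)).const_mul _)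
    ?_ (ae_of_all _ fun y => ?_)
  · have hce : Continuous fun y : EuclideanSpace ℝ (Fin m) => embed (m + 1) y - x :=
      (continuous_embed m).sub continuous_const
    have hQc : Continuous fun y : EuclideanSpace ℝ (Fin m) => ‖embed (m + 1) y - x‖ ^ 2 :=
      (hce.norm).pow 2
    have hQne : ∀ y : EuclideanSpace ℝ (Fin m), (‖embed (m + 1) y - x‖ ^ 2 : ℝ) ≠ 0 := fun y => by
      have := N_pos m hx.ne' y
      positivity
    exact (Continuous.aestronglyMeasurable
      ((hQc.rpow_const fun y => Or.inl (hQne y)).sub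
        (continuous_const.mul (hQc.rpow_const fun y => Or.inl (hQne y)))))
  · have hβpos : 0 < max (x (Fin.last m) / 2) (‖y‖ - (‖projE m x‖ + x (Fin.last m) / 2)) :=
      lt_of_lt_of_le (half_pos hx) (le_max_left _ _)
    have hβN := N_lower m (mem_ball_self (half_pos hx)) hx y
    have hN : 0 < ‖embed (m + 1) y - x‖ := lt_of_lt_of_le hβpos hβN
    have hNa : x (Fin.last m) ≤ ‖embed (m + 1) y - x‖ := by
      have h := abs_last_le_norm m y x
      rwa [abs_of_pos hx] at h
    set N := ‖embed (m + 1) y - x‖ with hNdef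
    have e1 : (N ^ 2) ^ rr m = N ^ (-((m : ℝ) + 1)) := by rw [sq_rpow hN, two_rr]
    have e2 : (N ^ 2) ^ (rr m - 1) = N ^ (-((m : ℝ) + 3)) := by
      rw [sq_rpow hN]; congr 1; simp [rr]; ring
    have k2 : N ^ (-((m : ℝ) + 3)) ≤ (x (Fin.last m) ^ 2)⁻¹ * N ^ (-((m : ℝ) + 1)) := by
      have e : N ^ (-((m : ℝ) + 3)) = N ^ (-((m : ℝ) + 1)) * N ^ (-(2 : ℝ)) := by
        rw [← Real.rpow_add hN]; congr 1; ring
      have h2 : N ^ (-(2 : ℝ)) ≤ x (Fin.last m) ^ (-(2 : ℝ)) :=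
        Real.rpow_le_rpow_of_nonpos hx hNa (by norm_num)
      have h3 : x (Fin.last m) ^ (-(2 : ℝ)) = (x (Fin.last m) ^ 2)⁻¹ := by
        rw [show (-(2:ℝ)) = -((2:ℕ) : ℝ) by norm_num, rpow_neg_nat hx]
      calc N ^ (-((m : ℝ) + 3)) = N ^ (-((m : ℝ) + 1)) * N ^ (-(2 : ℝ)) := e
        _ ≤ N ^ (-((m : ℝ) + 1)) * (x (Fin.last m) ^ 2)⁻¹ := by
            refine mul_le_mul_of_nonneg_left ?_ (Real.rpow_nonneg hN.le _)
            rw [← h3]; exact h2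
        _ = (x (Fin.last m) ^ 2)⁻¹ * N ^ (-((m : ℝ) + 1)) := by ring
    have k1 : ‖Kker m x y‖ ≤ N ^ (-((m : ℝ) + 1)) +
        ((m : ℝ) + 1) * x (Fin.last m) ^ 2 * N ^ (-((m : ℝ) + 3)) := by
      rw [Real.norm_eq_abs, Kker]
      refine (abs_sub _ _).trans ?_
      rw [abs_of_pos (Real.rpow_pos_of_pos (by positivity : (0:ℝ) < N ^ 2) _)]
      rw [e1]
      have : |((m : ℝ) + 1) * x (Fin.last m) ^ 2 * (N ^ 2) ^ (rr m - 1)| =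
          ((m : ℝ) + 1) * x (Fin.last m) ^ 2 * N ^ (-((m : ℝ) + 3)) := by
        rw [abs_mul, abs_mul, abs_of_nonneg (by positivity : (0:ℝ) ≤ (m:ℝ)+1),
          abs_of_nonneg (sq_nonneg _),
          abs_of_pos (Real.rpow_pos_of_pos (by positivity : (0:ℝ) < N ^ 2) _), e2]
      rw [this]
    have t1 : N ^ (-((m : ℝ) + 1)) ≤
        (max (x (Fin.last m) / 2) (‖y‖ - (‖projE m x‖ + x (Fin.last m) / 2))) ^
          (-((m : ℝ) + 1)) :=
      Real.rpow_le_rpow_of_nonpos hβpos hβN (neg_nonpos.mpr (by positivity))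
    have hcancel : ((m : ℝ) + 1) * x (Fin.last m) ^ 2 * ((x (Fin.last m) ^ 2)⁻¹ *
        N ^ (-((m : ℝ) + 1))) = ((m : ℝ) + 1) * N ^ (-((m : ℝ) + 1)) := by
      field_simp
    calc ‖Kker m x y‖ ≤ N ^ (-((m : ℝ) + 1)) +
        ((m : ℝ) + 1) * x (Fin.last m) ^ 2 * N ^ (-((m : ℝ) + 3)) := k1
      _ ≤ N ^ (-((m : ℝ) + 1)) + ((m : ℝ) + 1) * N ^ (-((m : ℝ) + 1)) := by
          have := mul_le_mul_of_nonneg_left k2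
            (by positivity : (0:ℝ) ≤ ((m : ℝ) + 1) * x (Fin.last m) ^ 2)
          rw [hcancel] at this
          linarith
      _ = (1 + ((m : ℝ) + 1)) * N ^ (-((m : ℝ) + 1)) := by ring
      _ ≤ (1 + ((m : ℝ) + 1)) * (max (x (Fin.last m) / 2)
          (‖y‖ - (‖projE m x‖ + x (Fin.last m) / 2))) ^ (-((m : ℝ) + 1)) :=
          mul_le_mul_of_nonneg_left t1 (by positivity)

lemma Kker_sign (m : ℕ) {x : EuclideanSpace ℝ (Fin (m + 1))} (hx : 0 < x (Fin.last m))
    (y : EuclideanSpace ℝ (Fin m)) :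
    (if ‖embed (m + 1) y - x‖ ^ 2 < ((m : ℝ) + 1) * (x (Fin.last m)) ^ 2 then (-1 : ℝ) else 1) *
      Kker m x y = |Kker m x y| := by
  have hQpos : 0 < ‖embed (m + 1) y - x‖ ^ 2 := by
    have := N_pos m hx.ne' y
    positivity
  have hfact : Kker m x y = (‖embed (m + 1) y - x‖ ^ 2) ^ (rr m - 1) *
      (‖embed (m + 1) y - x‖ ^ 2 - ((m : ℝ) + 1) * (x (Fin.last m)) ^ 2) := by
    rw [Kker]
    have h : (‖embed (m + 1) y - x‖ ^ 2 : ℝ) ^ rr m =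
        (‖embed (m + 1) y - x‖ ^ 2) ^ (rr m - 1) * ‖embed (m + 1) y - x‖ ^ 2 := by
      have h2 := Real.rpow_add_one hQpos.ne' (rr m - 1)
      rw [show rr m - 1 + 1 = rr m by ring] at h2
      exact h2
    rw [h]; ring
  have hQr : 0 < (‖embed (m + 1) y - x‖ ^ 2 : ℝ) ^ (rr m - 1) :=
    Real.rpow_pos_of_pos hQpos _
  by_cases h : ‖embed (m + 1) y - x‖ ^ 2 < ((m : ℝ) + 1) * (x (Fin.last m)) ^ 2
  · rw [if_pos h, hfact, abs_of_nonpos (by nlinarith)]; ring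
  · rw [if_neg h, hfact, abs_of_nonneg (by nlinarith [not_lt.mp h])]; ring


def qf (a s : ℝ) : ℝ := s ^ 2 + a ^ 2

def g0f (m : ℕ) (a s : ℝ) : ℝ := qf a s ^ rr m - ((m : ℝ) + 1) * a ^ 2 * qf a s ^ (rr m - 1)

def Gf (m : ℕ) (a s : ℝ) : ℝ := s ^ m * qf a s ^ rr m

def Gf' (m : ℕ) (a s : ℝ) : ℝ :=
  (m : ℝ) * s ^ (m - 1) * qf a s ^ rr m + s ^ m * (rr m * qf a s ^ (rr m - 1) * (2 * s))

lemma qf_pos {a : ℝ} (ha : 0 < a) (s : ℝ) : 0 < qf a s := by unfold qf; positivity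

lemma hasDerivAt_Gf (m : ℕ) {a : ℝ} (ha : 0 < a) (s : ℝ) :
    HasDerivAt (Gf m a) (Gf' m a s) s := by
  have hq : HasDerivAt (qf a) (2 * s) s := by
    have h := (hasDerivAt_pow 2 s).add_const (a ^ 2)
    show HasDerivAt (fun s => s ^ 2 + a ^ 2) (2 * s) s
    simpa [qf] using h
  have h1 := (hasDerivAt_pow m s).mul (hq.rpow_const (p := rr m) (Or.inl (qf_pos ha s).ne'))
  have h2 : Gf' m a s = ↑m * s ^ (m - 1) * qf a s ^ rr m +
      s ^ m * (2 * s * rr m * qf a s ^ (rr m - 1)) := by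
    unfold Gf'
    ring
  rw [h2]
  exact h1

lemma Gf'_eq (m : ℕ) (hm : 1 ≤ m) {a : ℝ} (ha : 0 < a) (s : ℝ) :
    Gf' m a s = s ^ (m - 1) * qf a s ^ (rr m - 1) * ((m : ℝ) * a ^ 2 - s ^ 2) := by
  have h1 : qf a s ^ rr m = qf a s ^ (rr m - 1) * qf a s := by
    have h2 := Real.rpow_add_one (qf_pos ha s).ne' (rr m - 1)
    rw [show rr m - 1 + 1 = rr m by ring] at h2
    exact h2
  have h2 : s ^ m = s ^ (m - 1) * s := by
    conv_lhs => rw [show m = (m - 1) + 1 from (Nat.succ_pred_eq_of_pos hm).symm]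
    rw [pow_succ]
  have h3 : 2 * rr m = -((m : ℝ) + 1) := two_rr m
  unfold Gf'
  rw [h1, h2]
  unfold qf
  linear_combination (s ^ (m - 1) * (s ^ 2 + a ^ 2) ^ (rr m - 1) * s ^ 2) * h3

lemma g0f_eq (m : ℕ) {a : ℝ} (ha : 0 < a) (s : ℝ) :
    g0f m a s = qf a s ^ (rr m - 1) * (s ^ 2 - (m : ℝ) * a ^ 2) := by
  have h1 : qf a s ^ rr m = qf a s ^ (rr m - 1) * qf a s := by
    have h2 := Real.rpow_add_one (qf_pos ha s).ne' (rr m - 1)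
    rw [show rr m - 1 + 1 = rr m by ring] at h2
    exact h2
  unfold g0f
  rw [h1]
  unfold qf
  ring

lemma continuous_Gf' (m : ℕ) {a : ℝ} (ha : 0 < a) : Continuous (Gf' m a) := by
  have hqc : Continuous (qf a) := by unfold qf; continuity
  have h1 : Continuous fun s => qf a s ^ rr m :=
    hqc.rpow_const fun s => Or.inl (qf_pos ha s).ne'
  have h2 : Continuous fun s => qf a s ^ (rr m - 1) :=
    hqc.rpow_const fun s => Or.inl (qf_pos ha s).ne'
  unfold Gf'
  exact ((continuous_const.mul (continuous_pow (m - 1))).mul h1).add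
    ((continuous_pow m).mul ((continuous_const.mul h2).mul
      (continuous_const.mul continuous_id)))

lemma tendsto_Gf (m : ℕ) {a : ℝ} (ha : 0 < a) :
    Filter.Tendsto (Gf m a) Filter.atTop (nhds 0) := by
  have hrrle : rr m ≤ 0 := by
    rw [rr]
    apply div_nonpos_of_nonpos_of_nonneg _ (by norm_num)
    have h : (0:ℝ) ≤ (m : ℝ) + 1 := by positivity
    linarith
  have hb : ∀ᶠ s in Filter.atTop, Gf m a s ≤ s⁻¹ := by
    filter_upwards [Filter.eventually_ge_atTop (1 : ℝ)] with s hs1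
    have hs : (0:ℝ) < s := by linarith
    have h1 : qf a s ^ rr m ≤ (s ^ 2) ^ rr m := by
      refine Real.rpow_le_rpow_of_nonpos (by positivity) ?_ hrrle
      unfold qf
      nlinarith [sq_nonneg a]
    calc Gf m a s = s ^ m * qf a s ^ rr m := rfl
      _ ≤ s ^ m * (s ^ 2) ^ rr m := mul_le_mul_of_nonneg_left h1 (by positivity)
      _ = s ^ m * s ^ (2 * rr m) := by rw [sq_rpow hs]
      _ = s⁻¹ := by
          rw [two_rr, ← Real.rpow_natCast s m, ← Real.rpow_add hs,
            show (m : ℝ) + -((m : ℝ) + 1) = -1 by ring, Real.rpow_neg_one]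
  have hb0 : ∀ᶠ s in Filter.atTop, 0 ≤ Gf m a s := by
    filter_upwards [Filter.eventually_ge_atTop (0 : ℝ)] with s hs
    exact mul_nonneg (pow_nonneg hs m) (Real.rpow_pos_of_pos (qf_pos ha s) _).le
  exact tendsto_of_tendsto_of_tendsto_of_le_of_le' tendsto_const_nhds
    tendsto_inv_atTop_zero hb0 hb

lemma oneD (m : ℕ) (hm : 1 ≤ m) {a : ℝ} (ha : 0 < a) :
    ∫ s in Set.Ioi (0 : ℝ), s ^ (m - 1) * |g0f m a s| =
      2 * ((m : ℝ) ^ ((m : ℝ) / 2) / (((m : ℝ) + 1) ^ (((m : ℝ) + 1) / 2) * a)) := by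
  have hmR : (0:ℝ) < (m : ℝ) := by exact_mod_cast hm
  set s₀ : ℝ := a * Real.sqrt m with hs₀def
  have hs₀ : 0 < s₀ := by
    have h : (0:ℝ) < Real.sqrt m := Real.sqrt_pos.mpr hmR
    positivity
  have hs₀sq : s₀ ^ 2 = (m : ℝ) * a ^ 2 := by
    rw [hs₀def, mul_pow, Real.sq_sqrt (Nat.cast_nonneg m)]
    ring
  have hcongr1 : Set.EqOn (fun s => s ^ (m - 1) * |g0f m a s|) (Gf' m a)
      (Set.Ioc (0:ℝ) s₀) := by
    intro s hs
    have hs0 : (0:ℝ) < s := hs.1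
    have hssq : s ^ 2 ≤ (m : ℝ) * a ^ 2 := by nlinarith [hs.2, hs₀sq]
    have h1 : (0:ℝ) ≤ qf a s ^ (rr m - 1) := (Real.rpow_pos_of_pos (qf_pos ha s) _).le
    show s ^ (m - 1) * |g0f m a s| = Gf' m a s
    rw [g0f_eq m ha s, abs_of_nonpos (mul_nonpos_of_nonneg_of_nonpos h1 (by linarith)),
      Gf'_eq m hm ha s]
    ring
  have hcongr2 : Set.EqOn (fun s => s ^ (m - 1) * |g0f m a s|) (fun s => -Gf' m a s)
      (Set.Ioi s₀) := by
    intro s hs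
    have hs0 : (0:ℝ) < s := lt_trans hs₀ hs
    have hssq : (m : ℝ) * a ^ 2 ≤ s ^ 2 := by nlinarith [Set.mem_Ioi.mp hs]
    have h1 : (0:ℝ) ≤ qf a s ^ (rr m - 1) := (Real.rpow_pos_of_pos (qf_pos ha s) _).le
    show s ^ (m - 1) * |g0f m a s| = -Gf' m a s
    rw [g0f_eq m ha s, abs_of_nonneg (mul_nonneg h1 (by linarith)), Gf'_eq m hm ha s]
    ring
  have hnn : ∀ s ∈ Set.Ioi s₀, 0 ≤ -Gf' m a s := by
    intro s hs
    have hs0 : (0:ℝ) < s := lt_trans hs₀ hs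
    have hssq : (m : ℝ) * a ^ 2 ≤ s ^ 2 := by nlinarith [Set.mem_Ioi.mp hs]
    have h1 : (0:ℝ) ≤ qf a s ^ (rr m - 1) := (Real.rpow_pos_of_pos (qf_pos ha s) _).le
    rw [Gf'_eq m hm ha s]
    have h2 : (0:ℝ) ≤ s ^ (m - 1) := pow_nonneg hs0.le _
    nlinarith [mul_nonneg (mul_nonneg h2 h1) (sub_nonneg.mpr hssq)]
  have htendneg : Filter.Tendsto (fun u => -Gf m a u) Filter.atTop (nhds 0) := by
    simpa using (tendsto_Gf m ha).neg
  have hd : ∀ s ∈ Set.Ici s₀, HasDerivAt (fun u => -Gf m a u) (-Gf' m a s) s :=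
    fun s _ => (hasDerivAt_Gf m ha s).neg
  have hIoc : ∫ s in Set.Ioc (0:ℝ) s₀, s ^ (m - 1) * |g0f m a s| = Gf m a s₀ := by
    rw [setIntegral_congr_fun measurableSet_Ioc hcongr1,
      ← intervalIntegral.integral_of_le hs₀.le,
      intervalIntegral.integral_eq_sub_of_hasDerivAt (fun t _ => hasDerivAt_Gf m ha t)
        ((continuous_Gf' m ha).intervalIntegrable _ _)]
    have hG0 : Gf m a 0 = 0 := by
      unfold Gf
      rw [zero_pow (by omega : m ≠ 0), zero_mul]
    rw [hG0, sub_zero]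
  have hIoiInt : IntegrableOn (fun s => -Gf' m a s) (Set.Ioi s₀) :=
    integrableOn_Ioi_deriv_of_nonneg' hd hnn htendneg
  have hIoi : ∫ s in Set.Ioi s₀, s ^ (m - 1) * |g0f m a s| = Gf m a s₀ := by
    rw [setIntegral_congr_fun measurableSet_Ioi hcongr2,
      integral_Ioi_of_hasDerivAt_of_nonneg' hd hnn htendneg]
    simp
  have hsplit : ∫ s in Set.Ioi (0:ℝ), s ^ (m - 1) * |g0f m a s| =
      (∫ s in Set.Ioc (0:ℝ) s₀, s ^ (m - 1) * |g0f m a s|) +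
        ∫ s in Set.Ioi s₀, s ^ (m - 1) * |g0f m a s| := by
    rw [← Set.Ioc_union_Ioi_eq_Ioi hs₀.le]
    refine setIntegral_union (Set.Ioc_disjoint_Ioi le_rfl) measurableSet_Ioi ?_ ?_
    · exact (integrableOn_congr_fun hcongr1 measurableSet_Ioc).mpr
        ((continuous_Gf' m ha).integrableOn_Ioc)
    · exact (integrableOn_congr_fun hcongr2 measurableSet_Ioi).mpr hIoiInt
  have hGs₀ : Gf m a s₀ =
      (m : ℝ) ^ ((m : ℝ) / 2) / (((m : ℝ) + 1) ^ (((m : ℝ) + 1) / 2) * a) := by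
    have hq₀ : qf a s₀ = a ^ 2 * ((m : ℝ) + 1) := by
      unfold qf
      rw [hs₀sq]
      ring
    have h₁ : s₀ ^ m = a ^ m * (m : ℝ) ^ ((m : ℝ) / 2) := by
      rw [hs₀def, mul_pow]
      congr 1
      rw [Real.sqrt_eq_rpow, ← Real.rpow_natCast ((m:ℝ) ^ ((1:ℝ)/2)) m,
        ← Real.rpow_mul (Nat.cast_nonneg m)]
      congr 1
      ring
    have h₂ : (a ^ 2 * ((m : ℝ) + 1)) ^ rr m = a ^ (2 * rr m) * ((m : ℝ) + 1) ^ rr m := by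
      rw [Real.mul_rpow (by positivity) (by positivity), sq_rpow ha]
    have h₃ : ((m : ℝ) + 1) ^ rr m = (((m : ℝ) + 1) ^ (((m : ℝ) + 1) / 2))⁻¹ := by
      rw [show rr m = -(((m : ℝ) + 1) / 2) by rw [rr]; ring, Real.rpow_neg (by positivity)]
    have h₄ : a ^ (2 * rr m) = (a ^ ((m : ℝ) + 1))⁻¹ := by
      rw [two_rr, Real.rpow_neg ha.le]
    have h₅ : (a : ℝ) ^ m * (a ^ ((m : ℝ) + 1))⁻¹ = a⁻¹ := by
      rw [← Real.rpow_natCast a m, ← Real.rpow_neg ha.le, ← Real.rpow_add ha,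
        show (m : ℝ) + -((m : ℝ) + 1) = -1 by ring, Real.rpow_neg_one]
    calc Gf m a s₀ = s₀ ^ m * qf a s₀ ^ rr m := rfl
      _ = (a ^ m * (m : ℝ) ^ ((m : ℝ) / 2)) * (a ^ (2 * rr m) * ((m : ℝ) + 1) ^ rr m) := by
          rw [h₁, hq₀, h₂]
      _ = ((m : ℝ) ^ ((m : ℝ) / 2) * (((m : ℝ) + 1) ^ (((m : ℝ) + 1) / 2))⁻¹) *
          (a ^ m * (a ^ ((m : ℝ) + 1))⁻¹) := by rw [h₃, h₄]; ring
      _ = (m : ℝ) ^ ((m : ℝ) / 2) * (((m : ℝ) + 1) ^ (((m : ℝ) + 1) / 2))⁻¹ * a⁻¹ := by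
          rw [h₅]
      _ = (m : ℝ) ^ ((m : ℝ) / 2) / (((m : ℝ) + 1) ^ (((m : ℝ) + 1) / 2) * a) := by
          ring
  rw [hsplit, hIoc, hIoi, hGs₀]
  ring

lemma sphereArea_pos (k : ℕ) (hk : 1 ≤ k) : 0 < sphereArea k := by
  have hk2 : (0:ℝ) < (k : ℝ) / 2 := by
    have h : (0:ℝ) < (k : ℝ) := by exact_mod_cast hk
    positivity
  exact div_pos (mul_pos two_pos (Real.rpow_pos_of_pos pi_pos _)) (Real.Gamma_pos_of_pos hk2)

lemma sphereArea_eq (m : ℕ) (hm : 1 ≤ m) :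
    (m : ℝ) * (volume (ball (0 : EuclideanSpace ℝ (Fin m)) 1)).toReal = sphereArea m := by
  haveI : Nonempty (Fin m) := ⟨⟨0, hm⟩⟩
  have hm2 : (0:ℝ) < (m : ℝ) / 2 := by
    have h : (0:ℝ) < (m : ℝ) := by exact_mod_cast hm
    positivity
  have hΓ1 : 0 < Real.Gamma ((m : ℝ) / 2 + 1) := Real.Gamma_pos_of_pos (by linarith)
  rw [EuclideanSpace.volume_ball, Fintype.card_fin]
  simp only [ENNReal.ofReal_one, one_pow, one_mul]
  rw [ENNReal.toReal_ofReal (le_of_lt (div_pos (pow_pos (Real.sqrt_pos.mpr pi_pos) m) hΓ1))]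
  have hΓ : Real.Gamma ((m : ℝ) / 2 + 1) = ((m : ℝ) / 2) * Real.Gamma ((m : ℝ) / 2) :=
    Real.Gamma_add_one hm2.ne'
  have hsp : Real.sqrt π ^ m = π ^ ((m : ℝ) / 2) := by
    rw [Real.sqrt_eq_rpow, ← Real.rpow_natCast (π ^ ((1:ℝ)/2)) m, ← Real.rpow_mul pi_pos.le]
    congr 1
    ring
  rw [hsp, hΓ, sphereArea]
  have hΓpos : 0 < Real.Gamma ((m : ℝ) / 2) := Real.Gamma_pos_of_pos hm2
  field_simp

lemma integral_abs_Kker (m : ℕ) (hm : 1 ≤ m) {x : EuclideanSpace ℝ (Fin (m + 1))}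
    (hx : 0 < x (Fin.last m)) :
    ∫ y : EuclideanSpace ℝ (Fin m), |Kker m x y| =
      sphereArea m * (2 * ((m : ℝ) ^ ((m : ℝ) / 2) /
        (((m : ℝ) + 1) ^ (((m : ℝ) + 1) / 2) * x (Fin.last m)))) := by
  have hrw : ∀ y : EuclideanSpace ℝ (Fin m), |Kker m x y| =
      (fun s : ℝ => |g0f m (x (Fin.last m)) s|) ‖y - projE m x‖ := by
    intro y
    simp only [Kker, g0f, qf]
    rw [normsq_embed_sub]
  haveI : Nonempty (Fin m) := ⟨⟨0, hm⟩⟩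
  haveI : Nontrivial (EuclideanSpace ℝ (Fin m)) := by
    refine nontrivial_of_ne (EuclideanSpace.single (⟨0, hm⟩ : Fin m) (1:ℝ)) 0 ?_
    intro h
    have h2 := congrArg norm h
    rw [EuclideanSpace.norm_single, norm_zero] at h2
    norm_num at h2
  calc ∫ y : EuclideanSpace ℝ (Fin m), |Kker m x y| =
      ∫ y : EuclideanSpace ℝ (Fin m),
        (fun s : ℝ => |g0f m (x (Fin.last m)) s|) ‖y - projE m x‖ :=
        integral_congr_ae (Filter.Eventually.of_forall hrw)
    _ = ∫ y : EuclideanSpace ℝ (Fin m), (fun z : EuclideanSpace ℝ (Fin m) =>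
          (fun s : ℝ => |g0f m (x (Fin.last m)) s|) ‖z‖) (y - projE m x) := rfl
    _ = ∫ y : EuclideanSpace ℝ (Fin m), (fun z : EuclideanSpace ℝ (Fin m) =>
          (fun s : ℝ => |g0f m (x (Fin.last m)) s|) ‖z‖) y :=
        integral_sub_right_eq_self (μ := volume)
          (fun z : EuclideanSpace ℝ (Fin m) =>
            (fun s : ℝ => |g0f m (x (Fin.last m)) s|) ‖z‖) (projE m x)
    _ = ∫ y : EuclideanSpace ℝ (Fin m), (fun s : ℝ => |g0f m (x (Fin.last m)) s|) ‖y‖ := rfl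
    _ = _ := by
        rw [MeasureTheory.integral_fun_norm_addHaar volume
          (fun s : ℝ => |g0f m (x (Fin.last m)) s|)]
        simp only [finrank_euclideanSpace_fin, nsmul_eq_mul, smul_eq_mul]
        rw [oneD m hm hx]
        rw [← sphereArea_eq m hm]
        simp only [measureReal_def]
        ring

end SharpAux

/-- the sharp constant for the normal derivative coincides with that
for the gradient when `p = ∞`. -/
theorem sharp_normal_derivative_constant_Linfty (n : ℕ) (hn : 2 ≤ n)
    (x : EuclideanSpace ℝ (Fin n)) (hx : 0 < x ⟨n - 1, by omega⟩) :
    sSup {r : ℝ | ∃ f : EuclideanSpace ℝ (Fin (n - 1)) → ℝ,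
        MemLp f ⊤ volume ∧ eLpNorm f ⊤ volume ≠ 0 ∧
        r = |fderiv ℝ (poisson n (by omega) f) x (lastUnit n (by omega))| /
              (eLpNorm f ⊤ volume).toReal} =
    4 * ((n : ℝ) - 1) ^ (((n : ℝ) - 1) / 2) * sphereArea (n - 1) /
      ((n : ℝ) ^ ((n : ℝ) / 2) * sphereArea n * x ⟨n - 1, by omega⟩) := by
  obtain ⟨m, rfl⟩ : ∃ m, n = m + 1 := ⟨n - 1, by omega⟩
  have hm : 1 ≤ m := by omega
  have hx' : 0 < x (Fin.last m) := hx
  show sSup {r : ℝ | ∃ f : EuclideanSpace ℝ (Fin m) → ℝ,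
      MemLp f ⊤ volume ∧ eLpNorm f ⊤ volume ≠ 0 ∧
      r = |fderiv ℝ (poisson (m + 1) (Nat.succ_pos m) f) x
            (lastUnit (m + 1) (Nat.succ_pos m))| / (eLpNorm f ⊤ volume).toReal} =
    4 * (((m + 1 : ℕ) : ℝ) - 1) ^ ((((m + 1 : ℕ) : ℝ) - 1) / 2) * sphereArea m /
      (((m + 1 : ℕ) : ℝ) ^ (((m + 1 : ℕ) : ℝ) / 2) * sphereArea (m + 1) * x (Fin.last m))
  rw [show (((m + 1 : ℕ) : ℝ)) = (m : ℝ) + 1 by push_cast; ring]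
  rw [show (m : ℝ) + 1 - 1 = (m : ℝ) by ring]
  have hωm : 0 < sphereArea m := SharpAux.sphereArea_pos m hm
  have hωm1 : 0 < sphereArea (m + 1) := SharpAux.sphereArea_pos (m + 1) (by omega)
  set C : ℝ := 4 * (m : ℝ) ^ ((m : ℝ) / 2) * sphereArea m /
      (((m : ℝ) + 1) ^ (((m : ℝ) + 1) / 2) * sphereArea (m + 1) * x (Fin.last m)) with hCdef
  have hC : C = 2 / sphereArea (m + 1) * ∫ y : EuclideanSpace ℝ (Fin m),
      |SharpAux.Kker m x y| := by
    rw [SharpAux.integral_abs_Kker m hm hx', hCdef]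
    have h1 : (((m : ℝ) + 1) ^ (((m : ℝ) + 1) / 2)) ≠ 0 :=
      (Real.rpow_pos_of_pos (by positivity) _).ne'
    field_simp
    ring
  refine IsGreatest.csSup_eq ⟨?_, ?_⟩
  · set f₀ : EuclideanSpace ℝ (Fin m) → ℝ := fun y =>
      if ‖embed (m + 1) y - x‖ ^ 2 < ((m : ℝ) + 1) * (x (Fin.last m)) ^ 2 then (-1 : ℝ) else 1
      with hf₀def
    have hf₀meas : AEStronglyMeasurable f₀ volume := by
      have hQc : Continuous fun y : EuclideanSpace ℝ (Fin m) => ‖embed (m + 1) y - x‖ ^ 2 :=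
        (((SharpAux.continuous_embed m).sub continuous_const).norm).pow 2
      have hms : MeasurableSet {y : EuclideanSpace ℝ (Fin m) |
          ‖embed (m + 1) y - x‖ ^ 2 < ((m : ℝ) + 1) * (x (Fin.last m)) ^ 2} :=
        measurableSet_lt hQc.measurable measurable_const
      exact (Measurable.ite hms measurable_const measurable_const).aestronglyMeasurable
    have hf₀mem : MemLp f₀ ⊤ volume := by
      refine memLp_top_of_bound hf₀meas 1 (Filter.Eventually.of_forall fun y => ?_)
      simp only [hf₀def]
      split_ifs <;> simp
    have hvol_ne : (volume : Measure (EuclideanSpace ℝ (Fin m))) ≠ 0 := by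
      intro h0
      have hb := measure_ball_pos volume (0 : EuclideanSpace ℝ (Fin m)) one_pos
      rw [h0] at hb
      simp at hb
    have hf₀norm : eLpNorm f₀ ⊤ volume = 1 := by
      have h : ∀ y, ‖f₀ y‖ = ‖(1:ℝ)‖ := fun y => by
        simp only [hf₀def]
        split_ifs <;> simp
      rw [eLpNorm_congr_norm_ae (Filter.Eventually.of_forall h),
        eLpNorm_const (1:ℝ) (by simp) hvol_ne]
      simp
    refine ⟨f₀, hf₀mem, by rw [hf₀norm]; exact one_ne_zero, ?_⟩
    rw [hf₀norm, ENNReal.toReal_one, div_one]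
    rw [SharpAux.fderiv_poisson m x hx' f₀ hf₀mem]
    have hint : (fun y => f₀ y * SharpAux.Kker m x y) =
        fun y => |SharpAux.Kker m x y| := by
      funext y
      simp only [hf₀def]
      exact SharpAux.Kker_sign m hx' y
    rw [hint]
    rw [abs_of_nonneg (mul_nonneg (div_nonneg (by norm_num) hωm1.le)
      (integral_nonneg fun y => abs_nonneg _))]
    exact hC
  · rintro r ⟨f, hf1, hf2, rfl⟩
    have hM : 0 < (eLpNorm f ⊤ volume).toReal :=
      ENNReal.toReal_pos hf2 hf1.eLpNorm_ne_top
    rw [SharpAux.fderiv_poisson m x hx' f hf1]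
    rw [div_le_iff₀ hM]
    have key : |∫ y : EuclideanSpace ℝ (Fin m), f y * SharpAux.Kker m x y| ≤
        (eLpNorm f ⊤ volume).toReal *
          ∫ y : EuclideanSpace ℝ (Fin m), |SharpAux.Kker m x y| := by
      calc |∫ y : EuclideanSpace ℝ (Fin m), f y * SharpAux.Kker m x y| ≤
          ∫ y : EuclideanSpace ℝ (Fin m), |f y * SharpAux.Kker m x y| := by
            simpa only [Real.norm_eq_abs] using norm_integral_le_integral_norm
              (fun y : EuclideanSpace ℝ (Fin m) => f y * SharpAux.Kker m x y)
        _ ≤ ∫ y : EuclideanSpace ℝ (Fin m),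
            (eLpNorm f ⊤ volume).toReal * |SharpAux.Kker m x y| := by
            refine integral_mono_of_nonneg (Filter.Eventually.of_forall fun y => abs_nonneg _)
              (((SharpAux.integrable_Kker m hx').abs).const_mul _) ?_
            filter_upwards [SharpAux.ae_abs_le hf1] with y hy
            rw [abs_mul]
            exact mul_le_mul_of_nonneg_right hy (abs_nonneg _)
        _ = (eLpNorm f ⊤ volume).toReal *
            ∫ y : EuclideanSpace ℝ (Fin m), |SharpAux.Kker m x y| :=
            integral_const_mul _ _
    rw [abs_mul, abs_of_pos (div_pos two_pos hωm1)]
    calc 2 / sphereArea (m + 1) * |∫ y : EuclideanSpace ℝ (Fin m), f y * SharpAux.Kker m x y| ≤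
        2 / sphereArea (m + 1) * ((eLpNorm f ⊤ volume).toReal *
          ∫ y : EuclideanSpace ℝ (Fin m), |SharpAux.Kker m x y|) :=
        mul_le_mul_of_nonneg_left key (by positivity)
      _ = C * (eLpNorm f ⊤ volume).toReal := by rw [hC]; ring
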